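/- Modified local lemma: let A₁,...,A_n be events in a probability space, and for each i let (J_i, K_i) be a partition of {1,...,n}\{i}. Suppose there is γ ∈ [0,1) such that for every i and every K ⊆ K_i, P(A_i | ∩_{k∈K} \overline{A_k}) ≤ γ(1 − γ·max_j |J_j|). Then P(∩_{i=1}^n \overline{A_i}) > 0. -/

import Mathlib

open MeasureTheory Finset in
/-- Modified local lemma: events `A i` with partitions `(J i, K i)` of `univ \ {i}`;
if there is `γ ∈ [0,1)` such that for every `i` and `K' ⊆ K i`, conditionally on the
intersection of the complements of the events indexed by `K'` (an event of positive
probability), the probability of `A i` is at most `γ(1 − γ max_j |J j|)`, then with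
positive probability no event occurs. -/
theorem stmt_17 {Ω : Type*} [MeasurableSpace Ω] (μ : Measure Ω)
    [IsProbabilityMeasure μ] (n : ℕ) (A : Fin n → Set Ω)
    (hA : ∀ i, MeasurableSet (A i)) (J K : Fin n → Finset (Fin n))
    (hpart : ∀ i, Disjoint (J i) (K i) ∧ J i ∪ K i = Finset.univ.erase i)
    (γ : ℝ) (hγ0 : 0 ≤ γ) (hγ1 : γ < 1)
    (hpos : ∀ i : Fin n, ∀ K' ⊆ K i, 0 < μ (⋂ k ∈ K', (A k)ᶜ))
    (hcond : ∀ i : Fin n, ∀ K' ⊆ K i,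
      μ (A i ∩ ⋂ k ∈ K', (A k)ᶜ) ≤
        ENNReal.ofReal (γ * (1 - γ * (Finset.univ.sup fun j => (J j).card : ℕ))) *
          μ (⋂ k ∈ K', (A k)ᶜ)) :
    0 < μ (⋂ i, (A i)ᶜ) := by
  classical
  set D : ℕ := Finset.univ.sup fun j => (J j).card with hD
  set c : ℝ := γ * (1 - γ * D) with hc
  by_cases h1 : 0 < 1 - γ * D
  swap
  · -- degenerate case: c ≤ 0, so all events are null
    have hc0 : c ≤ 0 := mul_nonpos_of_nonneg_of_nonpos hγ0 (le_of_not_gt h1)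
    have hA0 : ∀ i, μ (A i) = 0 := by
      intro i
      have h := hcond i ∅ (Finset.empty_subset _)
      simp only [Finset.notMem_empty, Set.iInter_of_empty, Set.iInter_univ,
        Set.inter_univ, measure_univ, mul_one] at h
      rw [ENNReal.ofReal_eq_zero.mpr hc0] at h
      exact le_antisymm h zero_le
    have hU : μ (⋃ i, A i) = 0 :=
      le_antisymm ((measure_iUnion_le _).trans (by simp [hA0])) zero_le
    have hEq : (⋂ i, (A i)ᶜ) = (⋃ i, A i)ᶜ := by
      rw [Set.compl_iUnion]
    rw [hEq, measure_compl (MeasurableSet.iUnion fun i => hA i) (measure_ne_top _ _), hU]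
    simp
  · -- main case
    have hc0 : 0 ≤ c := mul_nonneg hγ0 h1.le
    have hcγ : c ≤ γ := by
      have : 1 - γ * D ≤ 1 := by
        have : (0:ℝ) ≤ γ * D := mul_nonneg hγ0 (Nat.cast_nonneg _)
        linarith
      nlinarith
    -- real-valued shorthands
    set P : Finset (Fin n) → ℝ := fun S => (μ (⋂ k ∈ S, (A k)ᶜ)).toReal with hP
    set Q : Fin n → Finset (Fin n) → ℝ :=
      fun i S => (μ (A i ∩ ⋂ k ∈ S, (A k)ᶜ)).toReal with hQ
    have hPnonneg : ∀ S, 0 ≤ P S := fun S => ENNReal.toReal_nonneg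
    have hcondR : ∀ i : Fin n, ∀ K' ⊆ K i, Q i K' ≤ c * P K' := by
      intro i K' hK'
      have h := hcond i K' hK'
      have hne : ENNReal.ofReal c * μ (⋂ k ∈ K', (A k)ᶜ) ≠ ⊤ :=
        ENNReal.mul_ne_top ENNReal.ofReal_ne_top (measure_ne_top _ _)
      have := (ENNReal.toReal_le_toReal (measure_ne_top _ _) hne).mpr h
      rwa [ENNReal.toReal_mul, ENNReal.toReal_ofReal hc0] at this
    have hdirect : ∀ i : Fin n, ∀ S ⊆ K i, Q i S ≤ γ * P S := by
      intro i S hS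
      calc Q i S ≤ c * P S := hcondR i S hS
        _ ≤ γ * P S := mul_le_mul_of_nonneg_right hcγ (hPnonneg S)
    -- splitting identity
    have hsplit : ∀ (j : Fin n) (S : Finset (Fin n)), j ∉ S →
        P (insert j S) = P S - Q j S := by
      intro j S hj
      have hmeas : MeasurableSet (A j) := hA j
      have h := measure_inter_add_diff (μ := μ) (⋂ k ∈ S, (A k)ᶜ) hmeas
      have hset : (⋂ k ∈ insert j S, (A k)ᶜ) = (⋂ k ∈ S, (A k)ᶜ) \ A j := by
        rw [Finset.set_biInter_insert, Set.inter_comm, Set.diff_eq]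
      have htR : (μ ((⋂ k ∈ S, (A k)ᶜ) ∩ A j)).toReal
          + (μ ((⋂ k ∈ S, (A k)ᶜ) \ A j)).toReal = P S := by
        rw [← ENNReal.toReal_add (measure_ne_top _ _) (measure_ne_top _ _), h]
      have hQ' : Q j S = (μ ((⋂ k ∈ S, (A k)ᶜ) ∩ A j)).toReal := by
        simp only [hQ]; rw [Set.inter_comm]
      have hP' : P (insert j S) = (μ ((⋂ k ∈ S, (A k)ᶜ) \ A j)).toReal := by
        simp only [hP]; rw [hset]
      rw [hP', hQ', ← htR]; ring
    -- main bound by strong induction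
    have claim1 : ∀ m : ℕ, ∀ S : Finset (Fin n), S.card ≤ m →
        ∀ i ∉ S, Q i S ≤ γ * P S := by
      intro m
      induction m with
      | zero =>
        intro S hS i hi
        have : S = ∅ := Finset.card_eq_zero.mp (Nat.le_zero.mp hS)
        subst this
        exact hdirect i ∅ (Finset.empty_subset _)
      | succ m ih =>
        intro S hS i hi
        set SJ : Finset (Fin n) := S ∩ J i with hSJ
        set SK : Finset (Fin n) := S ∩ K i with hSK
        have hsub : S ⊆ Finset.univ.erase i := fun x hx =>
          Finset.mem_erase.mpr ⟨ne_of_mem_of_not_mem hx hi, Finset.mem_univ x⟩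
        have hSeq : S = SJ ∪ SK := by
          rw [hSJ, hSK, ← Finset.inter_union_distrib_left, (hpart i).2,
            Finset.inter_eq_left.mpr hsub]
        have hdisj : Disjoint SJ SK :=
          ((hpart i).1.mono Finset.inter_subset_right Finset.inter_subset_right)
        by_cases hJ : SJ = ∅
        · have : S ⊆ K i := by
            rw [hSeq, hJ, Finset.empty_union]; exact Finset.inter_subset_right
          exact hdirect i S this
        · have hJne : SJ.Nonempty := Finset.nonempty_of_ne_empty hJ
          have hKsub : SK ⊆ S := Finset.inter_subset_left
          have hKss : SK ⊂ S := by
            refine ⟨hKsub, fun habs => ?_⟩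
            obtain ⟨j, hj⟩ := hJne
            have hjS : j ∈ S := hSeq ▸ Finset.mem_union_left _ hj
            have : j ∈ SK := habs hjS
            exact (Finset.disjoint_left.mp hdisj hj) this
          have hKcard : SK.card ≤ m :=
            Nat.lt_succ_iff.mp (lt_of_lt_of_le (Finset.card_lt_card hKss) hS)
          -- numerator bound
          have hmono : (⋂ k ∈ S, (A k)ᶜ) ⊆ ⋂ k ∈ SK, (A k)ᶜ := by
            intro x hx
            simp only [Set.mem_iInter] at hx ⊢
            exact fun k hk => hx k (hKsub hk)
          have hnum : Q i S ≤ c * P SK := by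
            have h1' : Q i S ≤ Q i SK := by
              apply ENNReal.toReal_le_toReal (measure_ne_top _ _) (measure_ne_top _ _) |>.mpr
              exact measure_mono (Set.inter_subset_inter_right _ hmono)
            exact h1'.trans (hcondR i SK Finset.inter_subset_right)
          -- union bound
          have hset : (⋂ k ∈ SK, (A k)ᶜ) ⊆
              (⋂ k ∈ S, (A k)ᶜ) ∪ ⋃ j ∈ SJ, (A j ∩ ⋂ k ∈ SK, (A k)ᶜ) := by
            intro x hx
            by_cases hx2 : ∃ j ∈ SJ, x ∈ A j
            · obtain ⟨j, hj, hxj⟩ := hx2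
              exact Or.inr (Set.mem_biUnion hj ⟨hxj, hx⟩)
            · push_neg at hx2
              left
              simp only [Set.mem_iInter, Set.mem_compl_iff] at hx ⊢
              intro k hk
              rcases Finset.mem_union.mp (hSeq ▸ hk) with hkJ | hkK
              · exact hx2 k hkJ
              · exact hx k hkK
          have hubE : μ (⋂ k ∈ SK, (A k)ᶜ) ≤
              μ (⋂ k ∈ S, (A k)ᶜ) + ∑ j ∈ SJ, μ (A j ∩ ⋂ k ∈ SK, (A k)ᶜ) :=
            (measure_mono hset).trans ((measure_union_le _ _).trans
              (add_le_add le_rfl (measure_biUnion_finset_le _ _)))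
          have hub : P SK ≤ P S + ∑ j ∈ SJ, Q j SK := by
            have hne : (μ (⋂ k ∈ S, (A k)ᶜ) +
                ∑ j ∈ SJ, μ (A j ∩ ⋂ k ∈ SK, (A k)ᶜ)) ≠ ⊤ := by
              apply ENNReal.add_ne_top.mpr
              exact ⟨measure_ne_top _ _, (ENNReal.sum_lt_top.mpr
                (fun j _ => (measure_lt_top _ _))).ne⟩
            have := (ENNReal.toReal_le_toReal (measure_ne_top _ _) hne).mpr hubE
            rwa [ENNReal.toReal_add (measure_ne_top _ _)
              ((ENNReal.sum_lt_top.mpr (fun j _ => (measure_lt_top _ _))).ne),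
              ENNReal.toReal_sum (fun j _ => measure_ne_top _ _)] at this
          -- bound each term of the sum by IH
          have hsum : ∑ j ∈ SJ, Q j SK ≤ SJ.card * (γ * P SK) := by
            have : ∀ j ∈ SJ, Q j SK ≤ γ * P SK := by
              intro j hj
              have hjK : j ∉ SK := fun habs => Finset.disjoint_left.mp hdisj hj habs
              exact ih SK hKcard j hjK
            calc ∑ j ∈ SJ, Q j SK ≤ ∑ _j ∈ SJ, γ * P SK := Finset.sum_le_sum this
              _ = SJ.card * (γ * P SK) := by rw [Finset.sum_const, nsmul_eq_mul]
          have hcardD : (SJ.card : ℝ) ≤ D := by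
            have h1'' : SJ.card ≤ (J i).card :=
              Finset.card_le_card Finset.inter_subset_right
            have h2'' : (J i).card ≤ D :=
              Finset.le_sup (f := fun j => (J j).card) (Finset.mem_univ i)
            exact_mod_cast h1''.trans h2''
          -- combine
          have hx0 : 0 ≤ P SK := hPnonneg SK
          have key : (1 - γ * D) * P SK ≤ P S := by
            nlinarith [mul_nonneg hγ0 hx0, mul_nonneg (mul_nonneg hγ0 hγ0) hx0]
          calc Q i S ≤ c * P SK := hnum
            _ = γ * ((1 - γ * D) * P SK) := by rw [hc]; ring
            _ ≤ γ * P S := mul_le_mul_of_nonneg_left key hγ0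
    -- positivity by induction
    have claim2 : ∀ m : ℕ, ∀ S : Finset (Fin n), S.card ≤ m → 0 < P S := by
      intro m
      induction m with
      | zero =>
        intro S hS
        have : S = ∅ := Finset.card_eq_zero.mp (Nat.le_zero.mp hS)
        subst this
        simp [hP]
      | succ m ih =>
        intro S hS
        rcases S.eq_empty_or_nonempty with rfl | ⟨j, hj⟩
        · simp [hP]
        · set S' := S.erase j with hS'
          have hjS' : j ∉ S' := Finset.notMem_erase j S
          have hcard' : S'.card ≤ m := by
            have h := Finset.card_erase_of_mem hj
            have hne : 0 < S.card := Finset.card_pos.mpr ⟨j, hj⟩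
            rw [← hS'] at h
            omega
          have hpos' : 0 < P S' := ih S' hcard'
          have hb : Q j S' ≤ γ * P S' := claim1 m S' hcard' j hjS'
          have heq : S = insert j S' := (Finset.insert_erase hj).symm
          rw [heq, hsplit j S' hjS']
          nlinarith
    have hfin : 0 < P Finset.univ := claim2 n Finset.univ (by simp)
    simp only [hP, Finset.mem_univ, Set.iInter_true] at hfin
    exact (ENNReal.toReal_pos_iff.mp hfin).1
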